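/- arXiv:2408.16763 — 2 statements merged into one kernel-verified Lean document; each statement's English description precedes it below -/
import Mathlib

section
/- (Theorem 2, coverage from a confidence distribution.) Fix an observed sample y and define h : Θ → ℝ by h(θ) = F_θ(T(y,θ)), assumed measurable. Let G be a probability measure on Θ whose pushforward under h is the uniform distribution on [0,1] (the T-confidence-distribution property). Let α ∈ (0,1) and let S ⊆ [0,1] be a Borel set such that G({θ : h(θ) ∈ S}) ≥ 1−α. Then the Lebesgue measure of S is at least 1−α; consequently, if θ₀ ∈ Θ is such that F_{θ₀}(T(Y,θ₀)) is uniformly distributed on (0,1) when Y ∼ P_{θ₀}, then P_{θ₀}({y' : F_{θ₀}(T(y',θ₀)) ∈ S}) ≥ 1−α, i.e. the confidence set {θ : h(θ) ∈ S} built from G covers the true parameter with probability at least 1−α. -/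
open MeasureTheory

/-- **Theorem 2 (coverage from a confidence distribution).** Fix observed data `y` and
let `h θ = F θ (T y θ)`. If `G` is a probability measure on `Θ` whose pushforward under
`h` is the uniform distribution on `[0,1]` (the `T`-confidence-distribution property),
then for any `α ∈ (0,1)` and any Borel set `S ⊆ [0,1]` with `G {θ | h θ ∈ S} ≥ 1 - α`,
the Lebesgue measure of `S` is at least `1 - α`; consequently, for any `θ₀` such that
`F θ₀ (T ⬝ θ₀)` is uniformly distributed on `(0,1)` under `P θ₀`, the confidence set
`{θ | h θ ∈ S}` covers `θ₀` with probability at least `1 - α`. -/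
theorem stmt_2 {Y Θ : Type*} [MeasurableSpace Y] [MeasurableSpace Θ]
    (P : Θ → Measure Y) (hP : ∀ θ : Θ, IsProbabilityMeasure (P θ))
    (T : Y → Θ → ℝ)
    (F : Θ → ℝ → ℝ) (hF : ∀ (θ : Θ) (t : ℝ), F θ t = ((P θ) {y | T y θ ≤ t}).toReal)
    (y : Y)
    (h : Θ → ℝ) (hdef : ∀ θ : Θ, h θ = F θ (T y θ)) (hmeas : Measurable h)
    (G : Measure Θ) [IsProbabilityMeasure G]
    (hG : G.map h = volume.restrict (Set.Icc (0 : ℝ) 1))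
    (α : ℝ) (hα : α ∈ Set.Ioo (0 : ℝ) 1)
    (S : Set ℝ) (hS : MeasurableSet S) (hSsub : S ⊆ Set.Icc (0 : ℝ) 1)
    (hcov : ENNReal.ofReal (1 - α) ≤ G {θ | h θ ∈ S}) :
    ENNReal.ofReal (1 - α) ≤ volume S ∧
    ∀ θ₀ : Θ, Measurable (fun y' => F θ₀ (T y' θ₀)) →
      (P θ₀).map (fun y' => F θ₀ (T y' θ₀)) = volume.restrict (Set.Ioo (0 : ℝ) 1) →
      ENNReal.ofReal (1 - α) ≤ (P θ₀) {y' | F θ₀ (T y' θ₀) ∈ S} := by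
  have hSvol : ENNReal.ofReal (1 - α) ≤ volume S := by
    have h1 : G {θ | h θ ∈ S} = (G.map h) S := by
      rw [Measure.map_apply hmeas hS]; rfl
    have h2 : (G.map h) S = volume S := by
      rw [hG, Measure.restrict_apply hS, Set.inter_eq_self_of_subset_left hSsub]
    calc ENNReal.ofReal (1 - α) ≤ G {θ | h θ ∈ S} := hcov
      _ = volume S := by rw [h1, h2]
  have hIoo : volume (S ∩ Set.Ioo (0:ℝ) 1) = volume S := by
    have hnull : volume (S \ Set.Ioo (0:ℝ) 1) = 0 := by
      refine measure_mono_null (fun x hx => ?_) ((Set.toFinite ({0,1} : Set ℝ)).measure_zero volume)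
      obtain ⟨hxS, hxn⟩ := hx
      have hxIcc := hSsub hxS
      simp only [Set.mem_Ioo, not_and_or, not_lt] at hxn
      rcases hxn with h0 | h1
      · exact Or.inl (le_antisymm h0 hxIcc.1)
      · exact Or.inr (le_antisymm hxIcc.2 h1)
    have := measure_inter_add_diff (μ := volume) S (measurableSet_Ioo : MeasurableSet (Set.Ioo (0:ℝ) 1))
    rw [hnull, add_zero] at this
    exact this
  refine ⟨hSvol, fun θ₀ hm hmap => ?_⟩
  have : (P θ₀) {y' | F θ₀ (T y' θ₀) ∈ S} = ((P θ₀).map (fun y' => F θ₀ (T y' θ₀))) S := by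
    rw [Measure.map_apply hm hS]; rfl
  rw [this, hmap, Measure.restrict_apply hS, hIoo]
  exact hSvol
end

section
/- (Corollary 1, monotonicity of the observed coverage probability.) Let Θ be a measurable space, ℓ : Θ → ℝ and h : Θ → ℝ measurable functions, and X₁, X₂ two Θ-valued random variables. Assume: (C1) for all θ₁, θ₂ ∈ Θ, ℓ(θ₁) ≥ ℓ(θ₂) implies h(θ₁) ≤ h(θ₂); (C2) ℓ(X₂) first-order stochastically dominates ℓ(X₁), i.e. P(ℓ(X₂) > t) ≥ P(ℓ(X₁) > t) for all t ∈ ℝ; and the distribution of ℓ(X₁) is atomless. Then for every α ∈ (0,1), P(h(X₂) ≤ α) ≥ P(h(X₁) ≤ α). -/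
open MeasureTheory

/-- **Corollary 1 (monotonicity of the observed coverage probability).** Suppose
(C1) `ℓ θ₁ ≥ ℓ θ₂` implies `h θ₁ ≤ h θ₂`, (C2) `ℓ (X₂ ·)` first-order stochastically
dominates `ℓ (X₁ ·)`, and the distribution of `ℓ (X₁ ·)` is atomless. Then for every
`α ∈ (0,1)`, `P (h (X₂ ·) ≤ α) ≥ P (h (X₁ ·) ≤ α)`. -/
theorem stmt_5 {Ω Θ : Type*} [MeasurableSpace Ω] [MeasurableSpace Θ]
    (P : Measure Ω) [IsProbabilityMeasure P]
    (ℓ h : Θ → ℝ) (hℓ : Measurable ℓ) (hh : Measurable h)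
    (X₁ X₂ : Ω → Θ) (hX₁ : Measurable X₁) (hX₂ : Measurable X₂)
    (hC1 : ∀ θ₁ θ₂ : Θ, ℓ θ₂ ≤ ℓ θ₁ → h θ₁ ≤ h θ₂)
    (hC2 : ∀ t : ℝ, P {ω | t < ℓ (X₁ ω)} ≤ P {ω | t < ℓ (X₂ ω)})
    (hatomless : ∀ c : ℝ, P {ω | ℓ (X₁ ω) = c} = 0) :
    ∀ α ∈ Set.Ioo (0 : ℝ) 1, P {ω | h (X₁ ω) ≤ α} ≤ P {ω | h (X₂ ω) ≤ α} := by
  intro α _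
  set U : Set ℝ := {c | ∃ θ', h θ' ≤ α ∧ ℓ θ' ≤ c} with hU
  have hset : ∀ θ, h θ ≤ α ↔ ℓ θ ∈ U := by
    intro θ
    constructor
    · intro hθ; exact ⟨θ, hθ, le_refl _⟩
    · rintro ⟨θ', hθ', hle⟩; exact le_trans (hC1 θ θ' hle) hθ'
  have heq1 : {ω | h (X₁ ω) ≤ α} = {ω | ℓ (X₁ ω) ∈ U} := by
    ext ω; exact hset _
  have heq2 : {ω | h (X₂ ω) ≤ α} = {ω | ℓ (X₂ ω) ∈ U} := by
    ext ω; exact hset _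
  rw [heq1, heq2]
  by_cases hne : U.Nonempty
  · by_cases hbd : BddBelow U
    · set t := sInf U with ht
      have hsub1 : {ω | ℓ (X₁ ω) ∈ U} ⊆ {ω | t < ℓ (X₁ ω)} ∪ {ω | ℓ (X₁ ω) = t} := by
        intro ω hω
        rcases lt_or_eq_of_le (csInf_le hbd hω) with hlt | heq
        · exact Or.inl hlt
        · exact Or.inr heq.symm
      have hsub2 : {ω | t < ℓ (X₂ ω)} ⊆ {ω | ℓ (X₂ ω) ∈ U} := by
        intro ω hω
        obtain ⟨u, hu, hu'⟩ := exists_lt_of_csInf_lt hne hω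
        obtain ⟨θ', hθ', hle⟩ := hu
        exact ⟨θ', hθ', le_trans hle hu'.le⟩
      calc P {ω | ℓ (X₁ ω) ∈ U}
          ≤ P ({ω | t < ℓ (X₁ ω)} ∪ {ω | ℓ (X₁ ω) = t}) := measure_mono hsub1
        _ ≤ P {ω | t < ℓ (X₁ ω)} + P {ω | ℓ (X₁ ω) = t} := measure_union_le _ _
        _ = P {ω | t < ℓ (X₁ ω)} := by rw [hatomless t, add_zero]
        _ ≤ P {ω | t < ℓ (X₂ ω)} := hC2 t
        _ ≤ P {ω | ℓ (X₂ ω) ∈ U} := measure_mono hsub2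
    · have hall : ∀ c : ℝ, c ∈ U := by
        intro c
        obtain ⟨u, hu, hu'⟩ := not_bddBelow_iff.mp hbd c
        obtain ⟨θ', hθ', hle⟩ := hu
        exact ⟨θ', hθ', le_trans hle hu'.le⟩
      have h1 : {ω | ℓ (X₁ ω) ∈ U} = Set.univ := by
        ext ω; simp [hall]
      have h2 : {ω | ℓ (X₂ ω) ∈ U} = Set.univ := by
        ext ω; simp [hall]
      rw [h1, h2]
  · have hUe : U = ∅ := Set.not_nonempty_iff_eq_empty.mp hne
    have h1 : {ω | ℓ (X₁ ω) ∈ U} = ∅ := by ext ω; simp [hUe]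
    rw [h1, measure_empty]
    exact zero_le
end
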